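/- Let c be a (k+n)×(2g-2) integer matrix satisfying conditions (C1)-(C6) and let j ∈ {1,...,g} be an index with d_j even (i.e. j ∉ {j_1,...,j_{2T}}). Write e = c_{k+1, 2j-2} and f = c_{k+1, 2j-1}. If the number of indices t with j_t < j is even, then (c_{i,2j-2}) for i = k+1,...,k+n equals (e, e+1, e+1, ..., e+m-1, e+m-1, e+m) and (c_{i,2j-1}) for i = k+1,...,k+n equals (f, f-1, f-1, ..., f-m+1, f-m+1, f-m); if that number is odd, then (c_{i,2j-2}) for i = k+1,...,k+n equals (e, e, e+1, e+1, ..., e+m-1, e+m-1) and (c_{i,2j-1}) for i = k+1,...,k+n equals (f, f, f-1, f-1, ..., f-m+1, f-m+1). (This is Lemma A.4 of the appendix describing the pattern of the new rows of c^Γ at the columns of even componentwise degree.) -/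

import Mathlib

namespace BFM

/-- The sequence `a(k) = (0,0,1,1,…,k₁−1,k₁−1,k₁)`, indexed from `1`:
its `i`-th entry is `⌊(i−1)/2⌋`. -/
def seqA (i : ℤ) : ℤ := (i - 1) / 2

/-- The number of indices `i ∈ {1,…,K}` with `a i = x` (the multiplicity of `x` in the
sequence `a` of length `K`). -/
noncomputable def multCount (K : ℤ) (a : ℤ → ℤ) (x : ℤ) : ℕ :=
  ((Finset.Icc (1 : ℤ) K).filter fun i => a i = x).card

/-- `(i₁, i₂)` is a pair of special indices for the pair of sequences `(a, b)` of length
`K` with respect to `d`: `i₁ < i₂` and both row sums equal `d`. -/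
def IsSpecialPair (K d : ℤ) (a b : ℤ → ℤ) (i1 i2 : ℤ) : Prop :=
  1 ≤ i1 ∧ i1 < i2 ∧ i2 ≤ K ∧ a i1 + b i1 = d ∧ a i2 + b i2 = d

/-- Condition (I) for a nondecreasing sequence `a` and a nonincreasing sequence `b`, both
of length `K` (indices `1,…,K`), with respect to `d`. -/
structure CondI (K d : ℤ) (a b : ℤ → ℤ) : Prop where
  mono : ∀ i i', 1 ≤ i → i ≤ i' → i' ≤ K → a i ≤ a i'
  anti : ∀ i i', 1 ≤ i → i ≤ i' → i' ≤ K → b i' ≤ b i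
  sum_le : ∀ i, 1 ≤ i → i ≤ K → a i + b i ≤ d
  le_sum : ∀ i, 1 ≤ i → i ≤ K → d - 1 ≤ a i + b i
  special : ∃! p : ℤ × ℤ, IsSpecialPair K d a b p.1 p.2
  a_mult : ∀ x : ℤ, multCount K a x ≤ 2
  b_mult : ∀ x : ℤ, multCount K b x ≤ 2
  no_extra : ∀ i1 i2, IsSpecialPair K d a b i1 i2 →
    ∀ i, 1 ≤ i → i ≤ K → i ≠ i1 → i ≠ i2 → ¬(a i = a i1 ∧ b i = b i2)

/-- Condition (II) for a nondecreasing sequence `a` and a nonincreasing sequence `b`, both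
of length `K` (indices `1,…,K`), with respect to `d`. -/
structure CondII (K d : ℤ) (a b : ℤ → ℤ) : Prop where
  mono : ∀ i i', 1 ≤ i → i ≤ i' → i' ≤ K → a i ≤ a i'
  anti : ∀ i i', 1 ≤ i → i ≤ i' → i' ≤ K → b i' ≤ b i
  sum_le : ∀ i, 1 ≤ i → i ≤ K → a i + b i ≤ d + 1
  le_sum : ∀ i, 1 ≤ i → i ≤ K → d - 1 ≤ a i + b i
  exists_ell : ∃ l, 1 ≤ l ∧ l ≤ K ∧ a l + b l = d + 1
  a_mult : ∀ x : ℤ, multCount K a x ≤ 2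
  b_mult : ∀ x : ℤ, multCount K b x ≤ 2
  exists_istar : ∃ istar, 1 ≤ istar ∧ istar < K ∧ a istar = a (istar + 1) ∧
    a istar + b istar = d ∧ a (istar + 1) + b (istar + 1) = d ∧
    (∀ x y : ℤ, (x, y) ≠ (a istar, b istar) →
      ((Finset.Icc (1 : ℤ) K).filter fun i => a i = x ∧ b i = y).card ≤ 1) ∧
    (∀ x : ℤ, (x, d - x) ≠ (a istar, b istar) →
      ((Finset.Icc (1 : ℤ) K).filter fun i => x ≤ a i ∧ d - x ≤ b i).card ≤ 1)
  no_consec : ¬ ∃ i, 1 ≤ i ∧ i + 1 ≤ K ∧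
    a i + b i = d - 1 ∧ a (i + 1) + b (i + 1) = d - 1 ∧ a (i + 1) = a i + 1 ∧
    multCount K a (a i) = 1 ∧ multCount K a (a (i + 1)) = 1 ∧
    multCount K b (b i) = 1 ∧ multCount K b (b (i + 1)) = 1

/-- The data of the inductive construction of Lemma C1 / Proposition A.1: the parameters
`k₁, g, m, N, T`, the componentwise degrees `d`, the positions `jpos` of the odd degrees,
and the `k×(2g−2)` matrix `a` of prescribed vanishing orders. -/
structure StdData where
  k1 : ℤ
  g : ℤ
  m : ℤ
  N : ℤ
  T : ℤ
  d : ℤ → ℤ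
  jpos : ℤ → ℤ
  a : ℤ → ℤ → ℤ

namespace StdData

variable (S : StdData)

/-- `k = 2k₁ + 1`. -/
def k : ℤ := 2 * S.k1 + 1

/-- `n = 2m`. -/
def n : ℤ := 2 * S.m

/-- `d̂ⱼ = dⱼ + 2N`. -/
def dhat (j : ℤ) : ℤ := S.d j + 2 * S.N

/-- The matrix `a` extended by the boundary columns: column `0` is `a(k)` and column
`2g−1` is the reverse of `a(k)`. -/
def aext (i j : ℤ) : ℤ :=
  if j = 0 then seqA i
  else if j = 2 * S.g - 1 then seqA (2 * S.k1 + 2 - i)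
  else S.a i j

/-- `j_{t+1}`, with the convention that beyond `t = 2T` it is `g + 1`. -/
def jnext (t : ℤ) : ℤ := if t < 2 * S.T then S.jpos (t + 1) else S.g + 1

/-- The prescribed boundary column `c_{•,2g−1}` of length `k + n`:
`(N+k₁, N+k₁−1, N+k₁−1, …, N, N, N−1−k₁, N−2−k₁, N−2−k₁, …, N−m−k₁, N−m−k₁, N−m−k₁−1)`. -/
def lastCol (i : ℤ) : ℤ :=
  if i ≤ 2 * S.k1 + 1 then S.N + S.k1 - i / 2
  else S.N - 1 - S.k1 - (i - (2 * S.k1 + 1)) / 2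

/-- A `(k+n)×(2g−2)` matrix `c` extended by the boundary columns: column `0` is `a(k+n)`
and column `2g−1` is `lastCol`. -/
def cext (c : ℤ → ℤ → ℤ) (i j : ℤ) : ℤ :=
  if j = 0 then seqA i
  else if j = 2 * S.g - 1 then S.lastCol i
  else c i j

/-- The number of `t ∈ {1,…,2T}` with `j_t < j`. -/
noncomputable def oddCountBelow (j : ℤ) : ℕ :=
  ((Finset.Icc (1 : ℤ) (2 * S.T)).filter fun t => S.jpos t < j).card

/-- The hypothesis package: the constraints on the parameters and the componentwise
degrees, together with `(g,k)`-standardness (s1)–(s6) of the matrix `a`. -/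
structure Std : Prop where
  hk1 : 2 ≤ S.k1
  hg : 3 ≤ S.g
  hm : 1 ≤ S.m
  hN : S.k1 + S.m < S.N
  hT : 1 ≤ S.T
  hd_mem : ∀ j, 1 ≤ j → j ≤ S.g →
    S.d j = 2 * S.g - 3 ∨ S.d j = 2 * S.g - 2 ∨ S.d j = 2 * S.g - 1
  hd_one : S.d 1 = 2 * S.g - 2
  hd_g : S.d S.g = 2 * S.g - 2
  hj_mono : ∀ t t', 1 ≤ t → t < t' → t' ≤ 2 * S.T → S.jpos t < S.jpos t'
  hj_range : ∀ t, 1 ≤ t → t ≤ 2 * S.T → 1 ≤ S.jpos t ∧ S.jpos t ≤ S.g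
  hj_one : S.jpos 1 = 2
  hodd_iff : ∀ j, 1 ≤ j → j ≤ S.g →
    (Odd (S.d j) ↔ ∃ t, 1 ≤ t ∧ t ≤ 2 * S.T ∧ S.jpos t = j)
  hd_odd : ∀ s, 1 ≤ s → s ≤ S.T →
    S.d (S.jpos (2 * s - 1)) = 2 * S.g - 1 ∧ S.d (S.jpos (2 * s)) = 2 * S.g - 3
  ha_nonneg : ∀ i j, 1 ≤ i → i ≤ S.k → 1 ≤ j → j ≤ 2 * S.g - 2 → 0 ≤ S.a i j
  hs1 : ∀ i j, 1 ≤ i → i ≤ S.k → 1 ≤ j → j ≤ S.g - 1 →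
    S.a i (2 * j - 1) + S.a i (2 * j) = S.g - 1
  hs2 : ∀ j, 1 ≤ j → j ≤ S.g → S.d j = 2 * S.g - 2 →
    CondI S.k (S.g - 1) (fun i => S.aext i (2 * j - 2)) (fun i => S.aext i (2 * j - 1))
  hs3a : ∀ j, 1 ≤ j → j ≤ S.g → S.d j = 2 * S.g - 1 →
    CondII S.k (S.g - 1) (fun i => S.aext i (2 * j - 2)) (fun i => S.aext i (2 * j - 1))
  hs3b : ∀ j, 1 ≤ j → j ≤ S.g → S.d j = 2 * S.g - 3 →
    CondII S.k (S.g - 2) (fun i => S.aext i (2 * j - 2)) (fun i => S.aext i (2 * j - 1))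
  hs4 : S.a S.k 2 + S.a S.k 3 = S.g - 1
  hs5 : ∀ t, 1 ≤ t → t ≤ 2 * S.T →
    S.aext S.k (2 * S.jpos t - 2) ≤ S.k1 + S.jpos t - 1 ∧
    (S.aext S.k (2 * S.jpos t - 2) = S.k1 + S.jpos t - 2 →
      Even t ∨
        S.aext S.k (2 * S.jpos t - 2) + S.aext S.k (2 * S.jpos t - 1) =
          (S.d (S.jpos t) - 1) / 2) ∧
    (S.aext S.k (2 * S.jpos t - 2) = S.k1 + S.jpos t - 1 →
      Odd t ∧ S.aext (S.k - 1) (2 * S.jpos t - 2) < S.aext S.k (2 * S.jpos t - 2))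
  hs6 : ∀ t, 1 ≤ t → t ≤ 2 * S.T →
    S.aext S.k (2 * S.jpos t - 1) = S.g - 1 - S.k1 - S.jpos t →
    ∀ j, S.jpos t < j → j < S.jnext t →
      S.aext S.k (2 * j - 2) + S.aext S.k (2 * j - 1) = S.g - 2

/-- Conditions (C1)–(C6) on a `(k+n)×(2g−2)` integer matrix `c`. -/
def CondC (c : ℤ → ℤ → ℤ) : Prop :=
  -- (C1): the first k rows of c equal â, i.e. a with N added in every odd-indexed column
  (∀ i j, 1 ≤ i → i ≤ S.k → 1 ≤ j → j ≤ 2 * S.g - 2 →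
    c i j = S.a i j + if Odd j then S.N else 0) ∧
  -- (C2)
  (∀ i j, 1 ≤ i → i ≤ S.k + S.n → 1 ≤ j → j ≤ S.g - 1 →
    c i (2 * j - 1) + c i (2 * j) = S.g + S.N - 1) ∧
  -- (C3)
  (∀ j, 1 ≤ j → j ≤ S.g → Even (S.d j) →
    CondI (S.k + S.n) (S.dhat j / 2)
      (fun i => S.cext c i (2 * j - 2)) (fun i => S.cext c i (2 * j - 1))) ∧
  -- (C4)
  (∀ j, 1 ≤ j → j ≤ S.g → Odd (S.d j) →
    CondII (S.k + S.n) ((S.dhat j - 1) / 2)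
      (fun i => S.cext c i (2 * j - 2)) (fun i => S.cext c i (2 * j - 1))) ∧
  -- (C5)
  (∀ i t, S.k + 1 ≤ i → i ≤ S.k + S.n → 1 ≤ t → t < 2 * S.T →
    (S.cext c i (2 * S.jpos t - 2) + S.cext c i (2 * S.jpos t - 1) =
        (S.dhat (S.jpos t) - 1) / 2 →
      S.cext c i (2 * S.jpos (t + 1) - 2) + S.cext c i (2 * S.jpos (t + 1) - 1) =
        (S.dhat (S.jpos (t + 1)) - 1) / 2 - 1) ∧
    (S.cext c i (2 * S.jpos t - 2) + S.cext c i (2 * S.jpos t - 1) =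
        (S.dhat (S.jpos t) - 1) / 2 - 1 →
      S.cext c i (2 * S.jpos (t + 1) - 2) + S.cext c i (2 * S.jpos (t + 1) - 1) =
        (S.dhat (S.jpos (t + 1)) - 1) / 2)) ∧
  -- (C6)
  c (S.k + S.n) 2 + c (S.k + S.n) 3 = (S.dhat 2 - 1) / 2

end StdData


section AuxLemmas

open Finset

private lemma two_le_card_aux {α : Type*} {s : Finset α} {i j : α}
    (hij : i ≠ j) (hi : i ∈ s) (hj : j ∈ s) : 2 ≤ s.card := by
  classical
  have hsub : ({i, j} : Finset α) ⊆ s := by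
    intro x hx
    rcases Finset.mem_insert.mp hx with rfl | hx
    · exact hi
    · rcases Finset.mem_singleton.mp hx with rfl
      exact hj
  calc 2 = ({i, j} : Finset α).card := (Finset.card_pair hij).symm
    _ ≤ s.card := Finset.card_le_card hsub

private lemma three_le_card_aux {α : Type*} {s : Finset α} {i j l : α}
    (hij : i ≠ j) (hil : i ≠ l) (hjl : j ≠ l)
    (hi : i ∈ s) (hj : j ∈ s) (hl : l ∈ s) : 3 ≤ s.card := by
  classical
  have hsub : ({i, j, l} : Finset α) ⊆ s := by
    intro x hx
    rcases Finset.mem_insert.mp hx with rfl | hx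
    · exact hi
    · rcases Finset.mem_insert.mp hx with rfl | hx
      · exact hj
      · rcases Finset.mem_singleton.mp hx with rfl
        exact hl
  have hcard : ({i, j, l} : Finset α).card = 3 := by
    rw [Finset.card_insert_of_notMem (by simp [hij, hil]), Finset.card_pair hjl]
  calc 3 = ({i, j, l} : Finset α).card := hcard.symm
    _ ≤ s.card := Finset.card_le_card hsub

namespace StdData

variable (S : StdData)

lemma aext_zero (i : ℤ) : S.aext i 0 = seqA i := by simp [StdData.aext]

lemma aext_last (hg : 3 ≤ S.g) (i : ℤ) :
    S.aext i (2 * S.g - 1) = seqA (2 * S.k1 + 2 - i) := by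
  have h0 : (2 * S.g - 1 : ℤ) ≠ 0 := by omega
  simp [StdData.aext, h0]

lemma aext_mid (hg : 3 ≤ S.g) (i j : ℤ) (h1 : 1 ≤ j) (h2 : j ≤ 2 * S.g - 2) :
    S.aext i j = S.a i j := by
  have h0 : j ≠ 0 := by omega
  have h3 : j ≠ 2 * S.g - 1 := by omega
  simp [StdData.aext, h0, h3]

lemma cext_zero (c : ℤ → ℤ → ℤ) (i : ℤ) : S.cext c i 0 = seqA i := by
  simp [StdData.cext]

lemma cext_last (hg : 3 ≤ S.g) (c : ℤ → ℤ → ℤ) (i : ℤ) :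
    S.cext c i (2 * S.g - 1) = S.lastCol i := by
  have h0 : (2 * S.g - 1 : ℤ) ≠ 0 := by omega
  simp [StdData.cext, h0]

lemma cext_mid (hg : 3 ≤ S.g) (c : ℤ → ℤ → ℤ) (i j : ℤ) (h1 : 1 ≤ j) (h2 : j ≤ 2 * S.g - 2) :
    S.cext c i j = c i j := by
  have h0 : j ≠ 0 := by omega
  have h3 : j ≠ 2 * S.g - 1 := by omega
  simp [StdData.cext, h0, h3]

lemma lastCol_eq_seqA (i : ℤ) (h1 : 1 ≤ i) (h2 : i ≤ 2 * S.k1 + 1) :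
    S.lastCol i = seqA (2 * S.k1 + 2 - i) + S.N := by
  unfold StdData.lastCol seqA
  rw [if_pos h2]
  omega

lemma k_def : S.k = 2 * S.k1 + 1 := rfl

lemma n_def : S.n = 2 * S.m := rfl

end StdData

section WithData

variable (S : StdData) (hS : S.Std) (c : ℤ → ℤ → ℤ) (hc : S.CondC c)

include hS

include hc in
/-- transfer of C1 to the extended matrices, even columns -/
lemma cext_eq_aext_even (i j : ℤ) (hi1 : 1 ≤ i) (hi2 : i ≤ S.k)
    (hj1 : 1 ≤ j) (hj2 : j ≤ S.g) :
    S.cext c i (2 * j - 2) = S.aext i (2 * j - 2) := by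
  have hg := hS.hg
  by_cases hj : j = 1
  · subst hj
    norm_num
    rw [S.cext_zero, S.aext_zero]
  · have h2j : (1 : ℤ) ≤ 2 * j - 2 := by omega
    have h2j' : 2 * j - 2 ≤ 2 * S.g - 2 := by omega
    rw [S.cext_mid hg c i _ h2j h2j', S.aext_mid hg i _ h2j h2j']
    have hO : ¬ Odd (2 * j - 2) := by
      rw [Int.odd_iff]
      omega
    have := hc.1 i (2 * j - 2) hi1 hi2 h2j h2j'
    rw [if_neg hO, add_zero] at this
    exact this

include hc in
/-- transfer of C1 to the extended matrices, odd columns -/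
lemma cext_eq_aext_odd (i j : ℤ) (hi1 : 1 ≤ i) (hi2 : i ≤ S.k)
    (hj1 : 1 ≤ j) (hj2 : j ≤ S.g) :
    S.cext c i (2 * j - 1) = S.aext i (2 * j - 1) + S.N := by
  have hg := hS.hg
  by_cases hj : j = S.g
  · subst hj
    rw [S.cext_last hg c i, S.aext_last hg i]
    have hik : i ≤ 2 * S.k1 + 1 := by rw [S.k_def] at hi2; exact hi2
    exact S.lastCol_eq_seqA i hi1 hik
  · have h2j : (1 : ℤ) ≤ 2 * j - 1 := by omega
    have h2j' : 2 * j - 1 ≤ 2 * S.g - 2 := by omega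
    rw [S.cext_mid hg c i _ h2j h2j', S.aext_mid hg i _ h2j h2j']
    have hO : Odd (2 * j - 1) := by
      rw [Int.odd_iff]
      omega
    have := hc.1 i (2 * j - 1) hi1 hi2 h2j h2j'
    rw [if_pos hO] at this
    exact this

lemma d_even_eq (j : ℤ) (hj1 : 1 ≤ j) (hj2 : j ≤ S.g) (hev : Even (S.d j)) :
    S.d j = 2 * S.g - 2 := by
  obtain ⟨w, hw⟩ := hev
  rcases hS.hd_mem j hj1 hj2 with h | h | h <;> omega

include hc in
/-- At a column of even degree, every new row has sum `g + N - 2`. -/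
lemma sum_even_col (j : ℤ) (hj1 : 1 ≤ j) (hj2 : j ≤ S.g) (hev : Even (S.d j)) :
    ∀ i, S.k + 1 ≤ i → i ≤ S.k + S.n →
      S.cext c i (2 * j - 2) + S.cext c i (2 * j - 1) = S.g + S.N - 2 := by
  have hg := hS.hg
  have hk1 := hS.hk1
  have hm := hS.hm
  have hdj := d_even_eq S hS j hj1 hj2 hev
  have hIc := hc.2.2.1 j hj1 hj2 hev
  have hdd : S.dhat j / 2 = S.g + S.N - 1 := by
    unfold StdData.dhat
    omega
  rw [hdd] at hIc
  have hIa := hS.hs2 j hj1 hj2 hdj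
  obtain ⟨⟨p1, p2⟩, hp, -⟩ := hIa.special
  obtain ⟨hp1, hp12, hp2, hsa1, hsa2⟩ := hp
  simp only at hsa1 hsa2
  have hkn : S.k ≤ S.k + S.n := by rw [S.n_def]; omega
  have t1 : S.cext c p1 (2 * j - 2) + S.cext c p1 (2 * j - 1) = S.g + S.N - 1 := by
    rw [cext_eq_aext_even S hS c hc p1 j (by omega) (by omega) hj1 hj2,
        cext_eq_aext_odd S hS c hc p1 j (by omega) (by omega) hj1 hj2]
    omega
  have t2 : S.cext c p2 (2 * j - 2) + S.cext c p2 (2 * j - 1) = S.g + S.N - 1 := by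
    rw [cext_eq_aext_even S hS c hc p2 j (by omega) (by omega) hj1 hj2,
        cext_eq_aext_odd S hS c hc p2 j (by omega) (by omega) hj1 hj2]
    omega
  have hspc : IsSpecialPair (S.k + S.n) (S.g + S.N - 1)
      (fun i => S.cext c i (2 * j - 2)) (fun i => S.cext c i (2 * j - 1)) p1 p2 :=
    ⟨hp1, hp12, by omega, t1, t2⟩
  intro i hi1 hi2
  have hle := hIc.sum_le i (by omega) hi2
  have hge := hIc.le_sum i (by omega) hi2
  by_contra hne
  have hsum : S.cext c i (2 * j - 2) + S.cext c i (2 * j - 1) = S.g + S.N - 1 := by omega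
  have hspc2 : IsSpecialPair (S.k + S.n) (S.g + S.N - 1)
      (fun i => S.cext c i (2 * j - 2)) (fun i => S.cext c i (2 * j - 1)) p1 i :=
    ⟨hp1, by omega, hi2, t1, hsum⟩
  obtain ⟨p, -, hup⟩ := hIc.special
  have e1 := hup (p1, p2) hspc
  have e2 := hup (p1, i) hspc2
  rw [← e2] at e1
  have : p2 = i := (Prod.mk.injEq _ _ _ _).mp e1 |>.2
  omega


lemma a_k_one : S.a S.k 1 = S.g - 2 - S.k1 := by
  have hg := hS.hg
  have hk1 := hS.hk1
  have hk : S.k = 2 * S.k1 + 1 := rfl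
  have hIa := hS.hs2 1 le_rfl (by omega) hS.hd_one
  norm_num at hIa
  have hseq1 : seqA S.k = S.k1 := by simp only [seqA]; omega
  have hseq2 : seqA (S.k - 1) = S.k1 - 1 := by simp only [seqA]; omega
  have hseq3 : seqA (S.k - 2) = S.k1 - 1 := by simp only [seqA]; omega
  have haa : S.aext S.k 1 = S.a S.k 1 := S.aext_mid hg S.k 1 le_rfl (by omega)
  have h3a := hIa.le_sum S.k (by omega) le_rfl
  have h3b := hIa.sum_le S.k (by omega) le_rfl
  simp only [S.aext_zero, hseq1] at h3a h3b
  by_contra hfalse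
  have hv3 : S.aext S.k 1 = S.g - 1 - S.k1 := by omega
  have hanti21 := hIa.anti (S.k - 1) S.k (by omega) (by omega) le_rfl
  have h2a := hIa.le_sum (S.k - 1) (by omega) (by omega)
  have h2b := hIa.sum_le (S.k - 1) (by omega) (by omega)
  simp only [S.aext_zero, hseq2] at h2a h2b
  have hanti10 := hIa.anti (S.k - 2) (S.k - 1) (by omega) (by omega) (by omega)
  have h1a := hIa.le_sum (S.k - 2) (by omega) (by omega)
  have h1b := hIa.sum_le (S.k - 2) (by omega) (by omega)
  simp only [S.aext_zero, hseq3] at h1a h1b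
  rcases (by omega : S.aext (S.k - 1) 1 = S.g - 1 - S.k1 ∨ S.aext (S.k - 1) 1 = S.g - S.k1)
    with hcA | hcB
  · -- B(k-1) = g-1-k1
    rcases (by omega : S.aext (S.k - 2) 1 = S.g - 1 - S.k1 ∨ S.aext (S.k - 2) 1 = S.g - S.k1)
      with hdA | hdB
    · -- triple value g-1-k1
      refine absurd (hIa.b_mult (S.g - 1 - S.k1)) (not_le.mpr ?_)
      rw [multCount]
      refine lt_of_lt_of_le (by norm_num) (three_le_card_aux (i := S.k - 2) (j := S.k - 1)
        (l := S.k) (by omega) (by omega) (by omega) ?_ ?_ ?_) <;>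
      · refine Finset.mem_filter.mpr ⟨Finset.mem_Icc.mpr ⟨by omega, by omega⟩, ?_⟩
        show S.aext _ 1 = S.g - 1 - S.k1
        omega
    · -- special pair (k-2, k), no_extra violated at k-1
      have hsp : IsSpecialPair S.k (S.g - 1) (fun i => S.aext i 0) (fun i => S.aext i 1)
          (S.k - 2) S.k := by
        refine ⟨by omega, by omega, le_rfl, ?_, ?_⟩ <;>
          simp only [S.aext_zero, hseq1, hseq3] <;> omega
      exact hIa.no_extra (S.k - 2) S.k hsp (S.k - 1) (by omega) (by omega) (by omega)
        (by omega) ⟨by show seqA _ = seqA _; rw [hseq2, hseq3], by show S.aext _ 1 = S.aext _ 1; omega⟩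
  · -- B(k-1) = g-k1 : rows k-2, k-1, k all special
    have hdB : S.aext (S.k - 2) 1 = S.g - S.k1 := by omega
    have hsp1 : IsSpecialPair S.k (S.g - 1) (fun i => S.aext i 0) (fun i => S.aext i 1)
        (S.k - 2) (S.k - 1) := by
      refine ⟨by omega, by omega, by omega, ?_, ?_⟩ <;>
        simp only [S.aext_zero, hseq2, hseq3] <;> omega
    have hsp2 : IsSpecialPair S.k (S.g - 1) (fun i => S.aext i 0) (fun i => S.aext i 1)
        (S.k - 1) S.k := by
      refine ⟨by omega, by omega, le_rfl, ?_, ?_⟩ <;>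
        simp only [S.aext_zero, hseq1, hseq2] <;> omega
    obtain ⟨p, -, hup⟩ := hIa.special
    have e1 := hup (S.k - 2, S.k - 1) hsp1
    have e2 := hup (S.k - 1, S.k) hsp2
    rw [← e2] at e1
    have := (Prod.mk.injEq _ _ _ _).mp e1
    omega

lemma a_k_two : S.a S.k 2 = S.k1 + 1 := by
  have hg := hS.hg
  have hk1 := hS.hk1
  have hk : S.k = 2 * S.k1 + 1 := rfl
  have h1 := hS.hs1 S.k 1 (by omega) le_rfl le_rfl (by omega)
  norm_num at h1
  have h2 := a_k_one S hS
  omega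

include hc in
lemma col2_vals : ∀ r, 1 ≤ r → r ≤ S.n →
    S.cext c (S.k + r) 2 = S.k1 + 1 + r / 2 := by
  intro r h1 h2
  have hg := hS.hg
  have hk1 := hS.hk1
  have hm := hS.hm
  have hk : S.k = 2 * S.k1 + 1 := rfl
  have hn : S.n = 2 * S.m := rfl
  have hev1 : Even (S.d 1) := by rw [hS.hd_one]; exact ⟨S.g - 1, by ring⟩
  have hsum := sum_even_col S hS c hc 1 le_rfl (by omega) hev1 (S.k + r) (by omega) (by omega)
  norm_num at hsum
  rw [S.cext_zero] at hsum
  have hseq : seqA (S.k + r) = S.k1 + r / 2 := by simp only [seqA]; omega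
  rw [hseq] at hsum
  have hC2 := hc.2.1 (S.k + r) 1 (by omega) (by omega) le_rfl (by omega)
  norm_num at hC2
  have e1 : S.cext c (S.k + r) 1 = c (S.k + r) 1 := S.cext_mid hg c _ 1 le_rfl (by omega)
  have e2 : S.cext c (S.k + r) 2 = c (S.k + r) 2 := S.cext_mid hg c _ 2 (by omega) (by omega)
  omega


set_option maxHeartbeats 1000000 in
include hc in
/-- Core consequences of the CondII count conditions at the first odd column `j = 2`:
no duplicated pair `(A,B)` among rows with `A ≥ k1+1`, and no two rows with equal
`A ≥ k1+1` both of sum `≥ g+N-1`. -/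
lemma j2_sep :
    (∀ i i', 1 ≤ i → i < i' → i' ≤ S.k + S.n → S.k1 + 1 ≤ S.cext c i 2 →
      S.cext c i 2 = S.cext c i' 2 → S.cext c i 3 = S.cext c i' 3 → False) ∧
    (∀ i i', 1 ≤ i → i < i' → i' ≤ S.k + S.n → S.k1 + 1 ≤ S.cext c i 2 →
      S.cext c i 2 = S.cext c i' 2 →
      S.g + S.N - 1 ≤ S.cext c i 2 + S.cext c i 3 →
      S.g + S.N - 1 ≤ S.cext c i' 2 + S.cext c i' 3 → False) := by
  have hg := hS.hg
  have hk1 := hS.hk1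
  have hm := hS.hm
  have hk : S.k = 2 * S.k1 + 1 := rfl
  have hn : S.n = 2 * S.m := rfl
  have hjp1 : S.jpos 1 = 2 := hS.hj_one
  have hd2 : S.d 2 = 2 * S.g - 1 := by
    have h := (hS.hd_odd 1 le_rfl hS.hT).1
    rw [show (2 * (1:ℤ) - 1) = 1 by norm_num, hjp1] at h
    exact h
  have hodd2 : Odd (S.d 2) := ⟨S.g - 1, by omega⟩
  have H2 := hc.2.2.2.1 2 (by omega) (by omega) hodd2
  have hDD : (S.dhat 2 - 1) / 2 = S.g + S.N - 1 := by unfold StdData.dhat; omega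
  rw [hDD] at H2
  norm_num at H2
  have hAk : S.cext c S.k 2 = S.k1 + 1 := by
    have h := cext_eq_aext_even S hS c hc S.k 2 (by omega) le_rfl (by omega) (by omega)
    norm_num at h
    rw [h, S.aext_mid hg S.k 2 (by omega) (by omega), a_k_two S hS]
  have hA1 : S.cext c (S.k + 1) 2 = S.k1 + 1 := by
    have h := col2_vals S hS c hc 1 le_rfl (by omega)
    omega
  obtain ⟨ist, hist1, histK, histeq, histsum, histsum', hdup, hcnt⟩ := H2.exists_istar
  have Ha := hS.hs3a 2 (by omega) (by omega) hd2
  norm_num at Ha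
  obtain ⟨i0, hi01, hi0k, hi0eq, hi0s, hi0s', -, -⟩ := Ha.exists_istar
  try simp only at hi0eq hi0s hi0s'
  have hmid2 : ∀ i, 1 ≤ i → i ≤ S.k → S.cext c i 2 = S.aext i 2 := by
    intro i h1 h2
    have h := cext_eq_aext_even S hS c hc i 2 h1 h2 (by omega) (by omega)
    norm_num at h
    exact h
  have hmid3 : ∀ i, 1 ≤ i → i ≤ S.k → S.cext c i 3 = S.aext i 3 + S.N := by
    intro i h1 h2
    have h := cext_eq_aext_odd S hS c hc i 2 h1 h2 (by omega) (by omega)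
    norm_num at h
    exact h
  have hcA0 : S.cext c i0 2 = S.aext i0 2 := hmid2 i0 (by omega) (by omega)
  have hcA0' : S.cext c (i0 + 1) 2 = S.aext i0 2 := by
    rw [hmid2 (i0 + 1) (by omega) (by omega)]
    omega
  have hcB0 : S.cext c i0 3 = S.g + S.N - 1 - S.aext i0 2 := by
    rw [hmid3 i0 (by omega) (by omega)]
    omega
  have hcB0' : S.cext c (i0 + 1) 3 = S.g + S.N - 1 - S.aext i0 2 := by
    rw [hmid3 (i0 + 1) (by omega) (by omega)]
    omega
  have hx0le : S.aext i0 2 ≤ S.k1 + 1 := by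
    have h := H2.mono i0 S.k (by omega) (by omega) (by omega)
    try simp only at h
    omega
  have hx0ne : S.aext i0 2 ≠ S.k1 + 1 := by
    intro hx0
    refine absurd (H2.a_mult (S.k1 + 1)) (not_le.mpr ?_)
    rw [multCount]
    refine lt_of_lt_of_le (by norm_num) (three_le_card_aux (i := i0) (j := i0 + 1)
      (l := S.k + 1) (by omega) (by omega) (by omega) ?_ ?_ ?_) <;>
    · refine Finset.mem_filter.mpr ⟨Finset.mem_Icc.mpr ⟨by omega, by omega⟩, ?_⟩
      show S.cext c _ 2 = S.k1 + 1
      omega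
  have hstar : S.cext c ist 2 = S.aext i0 2 ∧
      S.cext c ist 3 = S.g + S.N - 1 - S.aext i0 2 := by
    by_contra hne
    have hd := hdup (S.aext i0 2) (S.g + S.N - 1 - S.aext i0 2) (by
      intro hcontra
      rw [Prod.mk.injEq] at hcontra
      try simp only at hcontra
      exact hne ⟨hcontra.1.symm, hcontra.2.symm⟩)
    refine absurd hd (not_le.mpr ?_)
    refine lt_of_lt_of_le (by norm_num) (two_le_card_aux (i := i0) (j := i0 + 1)
      (by omega) ?_ ?_) <;>
    · refine Finset.mem_filter.mpr ⟨Finset.mem_Icc.mpr ⟨by omega, by omega⟩, ?_⟩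
      exact ⟨by show S.cext c _ 2 = _; omega, by show S.cext c _ 3 = _; omega⟩
  constructor
  · intro i i' h1 h2 h3 h4 h5 h6
    have hd := hdup (S.cext c i 2) (S.cext c i 3) (by
      intro hcontra
      rw [Prod.mk.injEq] at hcontra
      try simp only at hcontra
      have h1' := hstar.1
      omega)
    refine absurd hd (not_le.mpr ?_)
    refine lt_of_lt_of_le (by norm_num) (two_le_card_aux (i := i) (j := i')
      (by omega) ?_ ?_) <;>
    · refine Finset.mem_filter.mpr ⟨Finset.mem_Icc.mpr ⟨by omega, by omega⟩, ?_⟩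
      exact ⟨by show S.cext c _ 2 = _; omega, by show S.cext c _ 3 = _; omega⟩
  · intro i i' h1 h2 h3 h4 h5 h6 h7
    have hc' := hcnt (S.cext c i 2) (by
      intro hcontra
      rw [Prod.mk.injEq] at hcontra
      try simp only at hcontra
      have h1' := hstar.1
      omega)
    refine absurd hc' (not_le.mpr ?_)
    refine lt_of_lt_of_le (by norm_num) (two_le_card_aux (i := i) (j := i')
      (by omega) ?_ ?_) <;>
    · refine Finset.mem_filter.mpr ⟨Finset.mem_Icc.mpr ⟨by omega, by omega⟩, ?_⟩
      exact ⟨by show _ ≤ S.cext c _ 2; omega, by show _ ≤ S.cext c _ 3; omega⟩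

set_option maxHeartbeats 1000000 in
include hc in
/-- At the first odd column (`j = jpos 1 = 2`), the sums of the new rows alternate:
`G-1, G, G-1, G, ...` where `G = g + N - 1`. -/
lemma sum_j2 : ∀ r, 1 ≤ r → r ≤ S.n →
    S.cext c (S.k + r) 2 + S.cext c (S.k + r) 3
      = S.g + S.N - 2 + (if Even r then 1 else 0) := by
  have hg := hS.hg
  have hk1 := hS.hk1
  have hm := hS.hm
  have hk : S.k = 2 * S.k1 + 1 := rfl
  have hn : S.n = 2 * S.m := rfl
  have hjp1 : S.jpos 1 = 2 := hS.hj_one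
  have hd2 : S.d 2 = 2 * S.g - 1 := by
    have h := (hS.hd_odd 1 le_rfl hS.hT).1
    rw [show (2 * (1:ℤ) - 1) = 1 by norm_num, hjp1] at h
    exact h
  have hodd2 : Odd (S.d 2) := ⟨S.g - 1, by omega⟩
  have H2 := hc.2.2.2.1 2 (by omega) (by omega) hodd2
  have hDD : (S.dhat 2 - 1) / 2 = S.g + S.N - 1 := by unfold StdData.dhat; omega
  rw [hDD] at H2
  norm_num at H2
  obtain ⟨hdup, hcnt⟩ := j2_sep S hS c hc
  have hAk : S.cext c S.k 2 = S.k1 + 1 := by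
    have h := cext_eq_aext_even S hS c hc S.k 2 (by omega) le_rfl (by omega) (by omega)
    norm_num at h
    rw [h, S.aext_mid hg S.k 2 (by omega) (by omega), a_k_two S hS]
  have hBk : S.cext c S.k 3 = S.g + S.N - 1 - (S.k1 + 1) := by
    have h := cext_eq_aext_odd S hS c hc S.k 2 (by omega) le_rfl (by omega) (by omega)
    norm_num at h
    rw [h, S.aext_mid hg S.k 3 (by omega) (by omega)]
    have h4 := hS.hs4
    have h5 := a_k_two S hS
    omega
  have hA := col2_vals S hS c hc
  have hA1 : S.cext c (S.k + 1) 2 = S.k1 + 1 := by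
    have h := hA 1 le_rfl (by omega)
    omega
  -- σ(1) = G - 1
  have hs1' : S.cext c (S.k + 1) 2 + S.cext c (S.k + 1) 3 = S.g + S.N - 2 := by
    have hub := H2.anti S.k (S.k + 1) (by omega) (by omega) (by omega)
    try simp only at hub
    have hlb := H2.le_sum (S.k + 1) (by omega) (by omega)
    try simp only at hlb
    by_contra hne2
    exact hdup S.k (S.k + 1) (by omega) (by omega) (by omega) (by omega)
      (by omega) (by omega)
  -- σ(r) = G - 1 for odd r ≥ 3
  have hodd3 : ∀ r, 3 ≤ r → r ≤ S.n → Odd r →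
      S.cext c (S.k + r) 2 + S.cext c (S.k + r) 3 = S.g + S.N - 2 := by
    intro r h3 hrn hro
    obtain ⟨q, hq⟩ := hro
    have hArz := hA r (by omega) hrn
    have hArz' := hA (r - 1) (by omega) (by omega)
    have hzeq : S.cext c (S.k + (r - 1)) 2 = S.cext c (S.k + r) 2 := by omega
    have hanti := H2.anti (S.k + (r - 1)) (S.k + r) (by omega) (by omega) (by omega)
    try simp only at hanti
    have hlb := H2.le_sum (S.k + r) (by omega) (by omega)
    try simp only at hlb
    have hub' := H2.sum_le (S.k + (r - 1)) (by omega) (by omega)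
    have hlb' := H2.le_sum (S.k + (r - 1)) (by omega) (by omega)
    try simp only at hub' hlb'
    have hnboth : ¬ (S.g + S.N - 1 ≤ S.cext c (S.k + (r - 1)) 2 + S.cext c (S.k + (r - 1)) 3 ∧
        S.g + S.N - 1 ≤ S.cext c (S.k + r) 2 + S.cext c (S.k + r) 3) := by
      rintro ⟨u1, u2⟩
      exact hcnt (S.k + (r - 1)) (S.k + r) (by omega) (by omega) (by omega) (by omega)
        hzeq u1 (by omega)
    omega
  -- σ(n) = G (C6)
  have hC6 : S.cext c (S.k + S.n) 2 + S.cext c (S.k + S.n) 3 = S.g + S.N - 1 := by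
    have h := hc.2.2.2.2.2
    rw [hDD] at h
    rw [S.cext_mid hg c _ 2 (by omega) (by omega), S.cext_mid hg c _ 3 (by omega) (by omega)]
    exact h
  -- σ(r) = G for even r
  have heven : ∀ r, 1 ≤ r → r ≤ S.n → Even r →
      S.cext c (S.k + r) 2 + S.cext c (S.k + r) 3 = S.g + S.N - 1 := by
    intro r h1 hrn hre
    obtain ⟨q, hq⟩ := hre
    by_cases hlast : r = S.n
    · rw [hlast]; exact hC6
    · have hArz := hA r h1 hrn
      have hAr1 := hA (r + 1) (by omega) (by omega)
      have hzeq : S.cext c (S.k + r) 2 = S.cext c (S.k + (r + 1)) 2 := by omega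
      have hodd' := hodd3 (r + 1) (by omega) (by omega) ⟨q, by omega⟩
      have hanti := H2.anti (S.k + r) (S.k + (r + 1)) (by omega) (by omega) (by omega)
      try simp only at hanti
      have hne : S.cext c (S.k + r) 2 + S.cext c (S.k + r) 3 ≠ S.g + S.N - 2 := by
        intro hsum
        exact hdup (S.k + r) (S.k + (r + 1)) (by omega) (by omega) (by omega) (by omega)
          hzeq (by omega)
      have hprev : S.cext c (S.k + (r - 1)) 2 + S.cext c (S.k + (r - 1)) 3
          = S.g + S.N - 2 := by
        rcases (by omega : r = 2 ∨ 3 ≤ r - 1) with h2' | h3'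
        · have hr1 : r - 1 = 1 := by omega
          rw [hr1]
          exact hs1'
        · exact hodd3 (r - 1) h3' (by omega) ⟨q - 1, by omega⟩
      have hanti2 := H2.anti (S.k + (r - 1)) (S.k + r) (by omega) (by omega) (by omega)
      try simp only at hanti2
      have hAprev := hA (r - 1) (by omega) (by omega)
      have hub' := H2.sum_le (S.k + r) (by omega) (by omega)
      try simp only at hub'
      have hlb' := H2.le_sum (S.k + r) (by omega) (by omega)
      try simp only at hlb'
      omega
  intro r h1 h2
  rcases Int.even_or_odd r with he | ho
  · rw [if_pos he]
    have := heven r h1 h2 he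
    omega
  · rw [if_neg (by rw [Int.even_iff]; obtain ⟨q, hq⟩ := ho; omega)]
    obtain ⟨q, hq⟩ := ho
    rcases (by omega : r = 1 ∨ 3 ≤ r) with h1' | h3'
    · rw [h1']
      have := hs1'
      omega
    · have := hodd3 r h3' h2 ⟨q, hq⟩
      omega


set_option maxHeartbeats 1000000 in
include hc in
/-- The sums of the new rows at every odd column, by induction on `t` using (C5). -/
lemma sum_odd_all : ∀ t, 1 ≤ t → t ≤ 2 * S.T → ∀ r, 1 ≤ r → r ≤ S.n →
    S.cext c (S.k + r) (2 * S.jpos t - 2) + S.cext c (S.k + r) (2 * S.jpos t - 1)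
      = (S.dhat (S.jpos t) - 1) / 2 - 1 + (if Even (t + r) then 0 else 1) := by
  intro t
  refine Int.le_induction (motive := fun t _ => t ≤ 2 * S.T → ∀ r, 1 ≤ r → r ≤ S.n →
    S.cext c (S.k + r) (2 * S.jpos t - 2) + S.cext c (S.k + r) (2 * S.jpos t - 1)
      = (S.dhat (S.jpos t) - 1) / 2 - 1 + (if Even (t + r) then 0 else 1)) ?_ ?_ t
  · intro _ r h1 h2
    have hjp1 : S.jpos 1 = 2 := hS.hj_one
    have hd2 : S.d 2 = 2 * S.g - 1 := by
      have h := (hS.hd_odd 1 le_rfl hS.hT).1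
      rw [show (2 * (1:ℤ) - 1) = 1 by norm_num, hjp1] at h
      exact h
    have hDD : (S.dhat 2 - 1) / 2 = S.g + S.N - 1 := by unfold StdData.dhat; omega
    rw [hjp1, show 2 * (2:ℤ) - 2 = 2 by norm_num, show 2 * (2:ℤ) - 1 = 3 by norm_num, hDD]
    have h := sum_j2 S hS c hc r h1 h2
    rcases Int.even_or_odd r with he | ho
    · rw [if_pos he] at h
      rw [if_neg (by obtain ⟨q, hq⟩ := he; rw [Int.even_iff]; omega)]
      omega
    · rw [if_neg (by obtain ⟨q, hq⟩ := ho; rw [Int.even_iff]; omega)] at h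
      obtain ⟨q, hq⟩ := ho
      rw [if_pos ⟨q + 1, by omega⟩]
      omega
  · intro t ht IH
    intro ht2 r h1 h2
    have hIH := IH (by omega) r h1 h2
    have hC5 := hc.2.2.2.2.1 (S.k + r) t (by omega) (by omega) (by omega) (by omega)
    rcases Int.even_or_odd (t + r) with he | ho
    · rw [if_pos he] at hIH
      obtain ⟨q, hq⟩ := he
      have hnext := hC5.2 (by omega)
      rw [if_neg (by rw [Int.even_iff]; omega)]
      omega
    · rw [if_neg (by obtain ⟨q, hq⟩ := ho; rw [Int.even_iff]; omega)] at hIH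
      obtain ⟨q, hq⟩ := ho
      have hnext := hC5.1 (by omega)
      rw [if_pos ⟨q + 1, by omega⟩]
      omega

lemma ocb_one : S.oddCountBelow 1 = 0 := by
  unfold StdData.oddCountBelow
  rw [Finset.filter_false_of_mem, Finset.card_empty]
  intro t ht
  obtain ⟨ht1, ht2⟩ := Finset.mem_Icc.mp ht
  have := (hS.hj_range t ht1 ht2).1
  omega

lemma ocb_succ_eq (j : ℤ) (hnone : ∀ t, 1 ≤ t → t ≤ 2 * S.T → S.jpos t ≠ j) :
    S.oddCountBelow (j + 1) = S.oddCountBelow j := by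
  unfold StdData.oddCountBelow
  congr 1
  apply Finset.filter_congr
  intro t ht
  obtain ⟨ht1, ht2⟩ := Finset.mem_Icc.mp ht
  have := hnone t ht1 ht2
  constructor <;> intro h <;> omega

lemma ocb_at (t0 : ℤ) (h1 : 1 ≤ t0) (h2 : t0 ≤ 2 * S.T) :
    S.oddCountBelow (S.jpos t0) = (t0 - 1).toNat ∧
    S.oddCountBelow (S.jpos t0 + 1) = t0.toNat := by
  constructor
  · unfold StdData.oddCountBelow
    have hset : (Finset.Icc (1:ℤ) (2 * S.T)).filter (fun t => S.jpos t < S.jpos t0)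
        = Finset.Icc 1 (t0 - 1) := by
      ext t
      simp only [Finset.mem_filter, Finset.mem_Icc]
      constructor
      · rintro ⟨⟨hb1, hb2⟩, hlt⟩
        refine ⟨hb1, ?_⟩
        by_contra hcon
        rcases (by omega : t0 < t ∨ t0 = t) with h | h
        · exact absurd (hS.hj_mono t0 t h1 h hb2) (by omega)
        · subst h
          exact absurd hlt (lt_irrefl _)
      · rintro ⟨hb1, hb2⟩
        exact ⟨⟨hb1, by omega⟩, hS.hj_mono t t0 hb1 (by omega) h2⟩
    rw [hset, Int.card_Icc]
    omega
  · unfold StdData.oddCountBelow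
    have hset : (Finset.Icc (1:ℤ) (2 * S.T)).filter (fun t => S.jpos t < S.jpos t0 + 1)
        = Finset.Icc 1 t0 := by
      ext t
      simp only [Finset.mem_filter, Finset.mem_Icc]
      constructor
      · rintro ⟨⟨hb1, hb2⟩, hlt⟩
        refine ⟨hb1, ?_⟩
        by_contra hcon
        exact absurd (hS.hj_mono t0 t h1 (by omega) hb2) (by omega)
      · rintro ⟨hb1, hb2⟩
        refine ⟨⟨hb1, by omega⟩, ?_⟩
        rcases (by omega : t < t0 ∨ t = t0) with h | h
        · have := hS.hj_mono t t0 hb1 h h2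
          omega
        · subst h
          omega
    rw [hset, Int.card_Icc]
    omega

set_option maxHeartbeats 1000000 in
include hc in
/-- The pattern of each column with even index among the new rows. -/
lemma main_rel : ∀ j, 1 ≤ j → j ≤ S.g → ∀ r, 1 ≤ r → r ≤ S.n →
    S.cext c (S.k + r) (2 * j - 2) = S.cext c (S.k + 1) (2 * j - 2)
      + (if Odd (S.oddCountBelow j) then (r - 1) / 2 else r / 2) := by
  have hg := hS.hg
  have hk1 := hS.hk1
  have hm := hS.hm
  have hk : S.k = 2 * S.k1 + 1 := rfl
  have hn : S.n = 2 * S.m := rfl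
  intro j
  refine Int.le_induction (motive := fun j _ => j ≤ S.g → ∀ r, 1 ≤ r → r ≤ S.n →
    S.cext c (S.k + r) (2 * j - 2) = S.cext c (S.k + 1) (2 * j - 2)
      + (if Odd (S.oddCountBelow j) then (r - 1) / 2 else r / 2)) ?_ ?_ j
  · intro _ r h1 h2
    rw [show 2 * (1:ℤ) - 2 = 0 by norm_num, S.cext_zero, S.cext_zero, ocb_one S hS]
    rw [if_neg (by rw [Nat.odd_iff]; omega)]
    simp only [seqA]
    omega
  · intro j hj IH
    intro hjg r h1 h2
    have hprev : ∀ i, 1 ≤ i → i ≤ S.k + S.n →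
        S.cext c i (2 * (j + 1) - 2) = (S.g + S.N - 1) - S.cext c i (2 * j - 1) := by
      intro i hi1 hi2
      have hC2 := hc.2.1 i j hi1 hi2 (by omega) (by omega)
      have e1 : S.cext c i (2 * j - 1) = c i (2 * j - 1) :=
        S.cext_mid hg c i _ (by omega) (by omega)
      have e2 : S.cext c i (2 * (j + 1) - 2) = c i (2 * j) := by
        rw [show 2 * (j + 1) - 2 = 2 * j by ring]
        exact S.cext_mid hg c i _ (by omega) (by omega)
      omega
    have hp1 := hprev (S.k + r) (by omega) (by omega)
    have hp2 := hprev (S.k + 1) (by omega) (by omega)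
    have hIH := IH (by omega) r h1 h2
    by_cases hev : Even (S.d j)
    · have hocb : S.oddCountBelow (j + 1) = S.oddCountBelow j := by
        apply ocb_succ_eq S hS
        intro t ht1 ht2 hteq
        exact (Int.not_odd_iff_even.mpr hev)
          ((hS.hodd_iff j (by omega) (by omega)).mpr ⟨t, ht1, ht2, hteq⟩)
      have hsr := sum_even_col S hS c hc j (by omega) (by omega) hev (S.k + r)
        (by omega) (by omega)
      have hs1 := sum_even_col S hS c hc j (by omega) (by omega) hev (S.k + 1)
        (by omega) (by omega)
      rw [hocb]
      rcases Nat.even_or_odd (S.oddCountBelow j) with ho | ho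
      · rw [if_neg (Nat.not_odd_iff_even.mpr ho)] at hIH ⊢
        omega
      · rw [if_pos ho] at hIH ⊢
        omega
    · have hoddd : Odd (S.d j) := Int.not_even_iff_odd.mp hev
      obtain ⟨t0, ht01, ht02, ht0eq⟩ := (hS.hodd_iff j (by omega) (by omega)).mp hoddd
      have hsums := sum_odd_all S hS c hc t0 ht01 ht02
      rw [ht0eq] at hsums
      have hsr := hsums r h1 h2
      have hs1 := hsums 1 le_rfl (by omega)
      have hocb1 := (ocb_at S hS t0 ht01 ht02).1
      have hocb2 := (ocb_at S hS t0 ht01 ht02).2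
      rw [ht0eq] at hocb1 hocb2
      have htnat : ∀ u : ℤ, 0 ≤ u → (Odd u.toNat ↔ Odd u) := by
        intro u hu
        rw [← Int.odd_coe_nat, Int.toNat_of_nonneg hu]
      rcases Int.even_or_odd t0 with hte | hto
      · obtain ⟨p, hp⟩ := hte
        have ho1 : Odd (S.oddCountBelow j) := by
          rw [hocb1, htnat (t0 - 1) (by omega)]
          exact ⟨p - 1, by omega⟩
        have ho2 : ¬ Odd (S.oddCountBelow (j + 1)) := by
          rw [hocb2, htnat t0 (by omega), Int.odd_iff]
          omega
        rw [if_pos ho1] at hIH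
        rw [if_neg ho2]
        rcases Int.even_or_odd r with hre | hro
        · obtain ⟨qq, hqq⟩ := hre
          rw [if_pos ⟨p + qq, by omega⟩] at hsr
          rw [if_neg (by rw [Int.even_iff]; omega)] at hs1
          omega
        · obtain ⟨qq, hqq⟩ := hro
          rw [if_neg (by rw [Int.even_iff]; omega)] at hsr
          rw [if_neg (by rw [Int.even_iff]; omega)] at hs1
          omega
      · obtain ⟨p, hp⟩ := hto
        have ho1 : ¬ Odd (S.oddCountBelow j) := by
          rw [hocb1, htnat (t0 - 1) (by omega), Int.odd_iff]
          omega
        have ho2 : Odd (S.oddCountBelow (j + 1)) := by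
          rw [hocb2, htnat t0 (by omega)]
          exact ⟨p, by omega⟩
        rw [if_neg ho1] at hIH
        rw [if_pos ho2]
        rcases Int.even_or_odd r with hre | hro
        · obtain ⟨qq, hqq⟩ := hre
          rw [if_neg (by rw [Int.even_iff]; omega)] at hsr
          rw [if_pos ⟨p + 1, by omega⟩] at hs1
          omega
        · obtain ⟨qq, hqq⟩ := hro
          rw [if_pos ⟨p + qq + 1, by omega⟩] at hsr
          rw [if_pos ⟨p + 1, by omega⟩] at hs1
          omega

end WithData

end AuxLemmas

open StdData in
/-- Lemma A.4 of the appendix: let `c` satisfy (C1)–(C6) and let `j ∈ {1,…,g}` with `dⱼ`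
even.  Writing `e = c_{k+1,2j−2}` and `f = c_{k+1,2j−1}`, if the number of indices `t`
with `jₜ < j` is even then the last `n = 2m` entries of columns `2j−2` and `2j−1` are
`(e, e+1, e+1, …, e+m−1, e+m−1, e+m)` and `(f, f−1, f−1, …, f−m+1, f−m+1, f−m)`
respectively, and if that number is odd they are
`(e, e, e+1, e+1, …, e+m−1, e+m−1)` and `(f, f, f−1, f−1, …, f−m+1, f−m+1)`; the `r`-th
of these entries (`1 ≤ r ≤ n`, row `k + r`) is expressed by the closed formulas below. -/
theorem condC_evenDegree_column_pattern (S : StdData) (hS : S.Std) (c : ℤ → ℤ → ℤ)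
    (hc : S.CondC c) (j : ℤ) (hj1 : 1 ≤ j) (hj2 : j ≤ S.g) (hev : Even (S.d j)) :
    ∀ r, 1 ≤ r → r ≤ S.n →
      (Even (S.oddCountBelow j) →
        S.cext c (S.k + r) (2 * j - 2) = S.cext c (S.k + 1) (2 * j - 2) + r / 2 ∧
        S.cext c (S.k + r) (2 * j - 1) = S.cext c (S.k + 1) (2 * j - 1) - r / 2) ∧
      (Odd (S.oddCountBelow j) →
        S.cext c (S.k + r) (2 * j - 2) = S.cext c (S.k + 1) (2 * j - 2) + (r - 1) / 2 ∧
        S.cext c (S.k + r) (2 * j - 1) = S.cext c (S.k + 1) (2 * j - 1) - (r - 1) / 2) := by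
  intro r h1 h2
  have hg := hS.hg
  have hm := hS.hm
  have hk1 := hS.hk1
  have hn : S.n = 2 * S.m := rfl
  have hk : S.k = 2 * S.k1 + 1 := rfl
  have hrel := main_rel S hS c hc j hj1 hj2 r h1 h2
  have hsr := sum_even_col S hS c hc j hj1 hj2 hev (S.k + r) (by omega) (by omega)
  have hs1 := sum_even_col S hS c hc j hj1 hj2 hev (S.k + 1) (by omega) (by omega)
  constructor
  · intro hoe
    rw [if_neg (Nat.not_odd_iff_even.mpr hoe)] at hrel
    exact ⟨hrel, by omega⟩
  · intro hoo
    rw [if_pos hoo] at hrel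
    exact ⟨hrel, by omega⟩

end BFM
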